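/- Let R be a ring with 2 ∈ J(R) and let a ∈ R. Then a is very clean if and only if a is strongly clean. -/

import Mathlib

/-- An element `a` of a ring is *very clean* if there is an idempotent `e` commuting with `a`
such that `a - e` or `a + e` is a unit. -/
def IsVeryClean {R : Type*} [Ring R] (a : R) : Prop :=
  ∃ e : R, IsIdempotentElem e ∧ a * e = e * a ∧ (IsUnit (a - e) ∨ IsUnit (a + e))

/-- A ring is *very clean* if every element is very clean. -/
def VeryCleanRing (R : Type*) [Ring R] : Prop :=
  ∀ a : R, IsVeryClean a

/-- An element `a` of a ring is *strongly clean* if there is an idempotent `e` commuting with `a`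
such that `a - e` is a unit. -/
def IsStronglyClean {R : Type*} [Ring R] (a : R) : Prop :=
  ∃ e : R, IsIdempotentElem e ∧ a * e = e * a ∧ IsUnit (a - e)

/-- A ring is *strongly clean* if every element is strongly clean. -/
def StronglyCleanRing (R : Type*) [Ring R] : Prop :=
  ∀ a : R, IsStronglyClean a

private lemma jac_one_sub_unit {R : Type*} [Ring R] {x : R}
    (hx : x ∈ (⊥ : Ideal R).jacobson) : IsUnit (1 - x) := by
  obtain ⟨s, hs⟩ := Ideal.exists_mul_sub_mem_of_sub_one_mem_jacobson (1 - x)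
    (by simpa using ((⊥ : Ideal R).jacobson.neg_mem hx))
  rw [Ideal.mem_bot, sub_eq_zero] at hs
  have hs' : s - s * x = 1 := by rw [mul_sub, mul_one] at hs; exact hs
  have hseq : s = 1 + s * x := sub_eq_iff_eq_add.mp hs'
  have hsx : s * x ∈ (⊥ : Ideal R).jacobson := Ideal.mul_mem_left _ s hx
  obtain ⟨t, ht⟩ := Ideal.exists_mul_sub_mem_of_sub_one_mem_jacobson s
    (by rw [hseq, add_sub_cancel_left]; exact hsx)
  rw [Ideal.mem_bot, sub_eq_zero] at ht
  have h1x : (1 : R) - x = t := by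
    calc (1 : R) - x = t * s * (1 - x) := by rw [ht, one_mul]
    _ = t := by rw [mul_assoc, hs, mul_one]
  have hleft : (1 - x) * s = 1 := by rw [h1x]; exact ht
  exact ⟨⟨1 - x, s, hleft, hs⟩, rfl⟩

private lemma unit_sub_jac {R : Type*} [Ring R] {u j : R}
    (hu : IsUnit u) (hj : j ∈ (⊥ : Ideal R).jacobson) : IsUnit (u - j) := by
  obtain ⟨v, rfl⟩ := hu
  have : (v : R) - j = v * (1 - ↑v⁻¹ * j) := by
    rw [mul_sub, mul_one, ← mul_assoc, Units.mul_inv, one_mul]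
  rw [this]
  exact v.isUnit.mul (jac_one_sub_unit (Ideal.mul_mem_left _ _ hj))

theorem very_clean_iff_strongly_clean_of_two_mem_jacobson (R : Type*) [Ring R]
    (h2 : (2 : R) ∈ (⊥ : Ideal R).jacobson) (a : R) :
    IsVeryClean a ↔ IsStronglyClean a := by
  constructor
  · rintro ⟨e, he, hc, hu | hu⟩
    · exact ⟨e, he, hc, hu⟩
    · refine ⟨e, he, hc, ?_⟩
      have h2e : 2 * e ∈ (⊥ : Ideal R).jacobson :=
        Ideal.mul_mem_right e _ h2
      have : a - e = (a + e) - 2 * e := by rw [two_mul]; abel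
      rw [this]
      exact unit_sub_jac hu h2e
  · rintro ⟨e, he, hc, hu⟩
    exact ⟨e, he, hc, Or.inl hu⟩
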